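/- arXiv:0712.2172 — 2 statements merged into one kernel-verified Lean document; each statement's English description precedes it below -/
import Mathlib

section
/- For every f ∈ 𝓛(F) and α ∈ F^×, the function x ↦ f(αx) belongs to 𝓛(F) and ∫^F f(αx) dx = |η(α)|^{−1}·X^{−ν(α)}·∫^F f(x) dx. -/
noncomputable section

open MeasureTheory

/-- A field `F` with a split valuation `ν : F^× → Γ` (split by `t`), with residue field `k`,
residue map `ρ : O_F → k`, where `Γ` has a minimal positive element `one`. -/
structure LiftSetup (Γ F k : Type*) [AddCommGroup Γ] [LinearOrder Γ] [IsOrderedAddMonoid Γ] [Field F] [Field k] where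
  /-- the valuation (recorded on nonzero elements) -/
  ν : F → Γ
  /-- the splitting homomorphism `t : Γ → F^×` -/
  t : Γ → F
  /-- the residue map (recorded on the valuation ring) -/
  ρ : F → k
  /-- the minimal positive element of `Γ` -/
  one : Γ
  one_pos : 0 < one
  one_min : ∀ γ : Γ, 0 < γ → one ≤ γ
  ν_mul : ∀ x y : F, x ≠ 0 → y ≠ 0 → ν (x * y) = ν x + ν y
  ν_add : ∀ x y : F, x ≠ 0 → y ≠ 0 → x + y ≠ 0 → min (ν x) (ν y) ≤ ν (x + y)
  t_ne : ∀ γ : Γ, t γ ≠ 0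
  t_add : ∀ γ δ : Γ, t (γ + δ) = t γ * t δ
  ν_t : ∀ γ : Γ, ν (t γ) = γ
  ρ_add : ∀ x y : F, (x = 0 ∨ 0 ≤ ν x) → (y = 0 ∨ 0 ≤ ν y) → ρ (x + y) = ρ x + ρ y
  ρ_mul : ∀ x y : F, (x = 0 ∨ 0 ≤ ν x) → (y = 0 ∨ 0 ≤ ν y) → ρ (x * y) = ρ x * ρ y
  ρ_one : ρ 1 = 1
  ρ_surj : ∀ u : k, ∃ x : F, (x = 0 ∨ 0 ≤ ν x) ∧ ρ x = u
  ρ_eq_zero : ∀ x : F, (x = 0 ∨ 0 ≤ ν x) → (ρ x = 0 ↔ (x = 0 ∨ 0 < ν x))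

namespace LiftSetup

variable {Γ F k : Type*} [AddCommGroup Γ] [LinearOrder Γ] [IsOrderedAddMonoid Γ] [Field F] [Field k]
variable (S : LiftSetup Γ F k)

/-- The ring of integers `O_F` of the valuation. -/
def integers : Set F := {x | x = 0 ∨ 0 ≤ S.ν x}

/-- The translated fractional ideal `a + t(γ)O_F`. -/
def fracIdeal (a : F) (γ : Γ) : Set F := {x | (x - a) * S.t (-γ) ∈ S.integers}

/-- The lift `f^{a,γ}` of a function `f` on the residue field `k`:
`f^{a,γ}(x) = f(ρ((x-a)t(-γ)))` for `x ∈ a + t(γ)O_F` and `0` otherwise. -/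
def lift {A : Type*} [Zero A] (f : k → A) (a : F) (γ : Γ) : F → A :=
  (S.fracIdeal a γ).indicator fun x => f (S.ρ ((x - a) * S.t (-γ)))

/-- The homomorphism `η : F^× → k^×`, `x ↦ ρ(x t(-ν x))`. -/
def η (x : F) : k := S.ρ (x * S.t (-S.ν x))

end LiftSetup

section CGamma

variable (Γ : Type*) [AddCommGroup Γ] [LinearOrder Γ] [IsOrderedAddMonoid Γ]

instance : IsDomain (AddMonoidAlgebra ℂ Γ) := NoZeroDivisors.to_isDomain _

/-- `ℂ(Γ)`: the field of fractions of the complex group algebra of `Γ`. -/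
abbrev CGamma : Type _ := FractionRing (AddMonoidAlgebra ℂ Γ)

/-- The canonical embedding `ℂ → ℂ(Γ)`. -/
def embC : ℂ →+* CGamma Γ :=
  (algebraMap (AddMonoidAlgebra ℂ Γ) (CGamma Γ)).comp AddMonoidAlgebra.singleZeroRingHom

variable {Γ}

/-- The basis element `X^γ` of `ℂ(Γ)`. -/
def Xp (γ : Γ) : CGamma Γ :=
  algebraMap (AddMonoidAlgebra ℂ Γ) (CGamma Γ) (AddMonoidAlgebra.single γ 1)

end CGamma

section LFmu

variable {Γ F k : Type*} [AddCommGroup Γ] [LinearOrder Γ] [IsOrderedAddMonoid Γ] [Field F] [Field k]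
  [MeasurableSpace k]

open MeasureTheory

/-- `𝓛(F)`: the `ℂ(Γ)`-span of the lifts of Haar-integrable functions on `k`. -/
def LFmu (S : LiftSetup Γ F k) (μ : Measure k) : Submodule (CGamma Γ) (F → CGamma Γ) :=
  Submodule.span (CGamma Γ)
    {g | ∃ f : k → ℂ, Integrable f μ ∧ ∃ (a : F) (γ : Γ),
        g = S.lift (fun u => embC Γ (f u)) a γ}

theorem liftC_mem_mu (S : LiftSetup Γ F k) (μ : Measure k)
    {f : k → ℂ} (hf : Integrable f μ) (a : F) (γ : Γ) :
    S.lift (fun u => embC Γ (f u)) a γ ∈ LFmu S μ :=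
  Submodule.subset_span ⟨f, hf, a, γ, rfl⟩

/-- `𝓛^γ`: the complex span of the lifts of Haar-integrable functions at height `γ`. -/
def Lheight (S : LiftSetup Γ F k) (μ : Measure k) (γ : Γ) : Submodule ℂ (F → ℂ) :=
  Submodule.span ℂ {g | ∃ f : k → ℂ, Integrable f μ ∧ ∃ a : F, g = S.lift f a γ}

end LFmu

lemma Xp_add {Γ : Type*} [AddCommGroup Γ] [LinearOrder Γ] [IsOrderedAddMonoid Γ] (γ δ : Γ) :
    Xp (γ + δ) = Xp γ * Xp δ := by
  unfold Xp
  rw [← map_mul]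
  congr 1
  rw [AddMonoidAlgebra.single_mul_single, one_mul]

lemma LiftSetup.mul_unit_mem {Γ F k : Type*} [AddCommGroup Γ] [LinearOrder Γ] [IsOrderedAddMonoid Γ] [Field F] [Field k]
    (S : LiftSetup Γ F k) {β : F} (hβ : β ≠ 0) (hν : S.ν β = 0) (y : F) :
    y * β ∈ S.integers ↔ y ∈ S.integers := by
  by_cases hy : y = 0
  · simp [hy, LiftSetup.integers]
  · have h1 : S.ν (y * β) = S.ν y := by rw [S.ν_mul _ _ hy hβ, hν, add_zero]
    simp [LiftSetup.integers, hy, mul_ne_zero hy hβ, h1]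

set_option maxHeartbeats 1000000 in
open MeasureTheory in
/-- For every `f ∈ 𝓛(F)` and `α ∈ F^×`, the function `x ↦ f(αx)` belongs
to `𝓛(F)` and `∫^F f(αx) dx = |η(α)|⁻¹·X^{-ν(α)}·∫^F f(x) dx`, where `|·|` is the
normalized absolute value of the residue field `k`. -/
theorem statement8
    {Γ F k : Type*} [AddCommGroup Γ] [LinearOrder Γ] [IsOrderedAddMonoid Γ] [Field F] [Field k]
    [TopologicalSpace k] [IsTopologicalRing k] [LocallyCompactSpace k]
    [MeasurableSpace k] [BorelSpace k]
    (hk_nondiscrete : ¬ IsOpen ({0} : Set k))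
    (μ : Measure k) [μ.IsAddHaarMeasure]
    (S : LiftSetup Γ F k)
    -- the normalized absolute value on `k`:
    (abs : k → ℝ)
    (habs_pos : ∀ c : k, c ≠ 0 → 0 < abs c)
    (habs : ∀ (g : k → ℂ), Integrable g μ → ∀ c : k, c ≠ 0 →
      Integrable (fun u => g (c * u)) μ ∧ (∫ u, g (c * u) ∂μ) = (abs c)⁻¹ • ∫ u, g u ∂μ)
    -- the integral `∫^F` on `𝓛(F)`:
    (J : LFmu S μ →ₗ[CGamma Γ] CGamma Γ)
    (hJ : ∀ (f : k → ℂ) (hf : Integrable f μ) (a : F) (γ : Γ),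
      J ⟨S.lift (fun u => embC Γ (f u)) a γ, liftC_mem_mu S μ hf a γ⟩
        = embC Γ (∫ u, f u ∂μ) * Xp γ)
    (f : F → CGamma Γ) (hf : f ∈ LFmu S μ) (α : F) (hα : α ≠ 0) :
    ∃ hmem : (fun x => f (α * x)) ∈ LFmu S μ,
      J ⟨fun x => f (α * x), hmem⟩
        = embC Γ (((abs (S.η α))⁻¹ : ℝ) : ℂ) * Xp (-(S.ν α)) * J ⟨f, hf⟩ := by
  classical
  set β : F := α * S.t (-S.ν α) with hβdef
  have hβne : β ≠ 0 := mul_ne_zero hα (S.t_ne _)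
  have hνβ : S.ν β = 0 := by
    rw [hβdef, S.ν_mul _ _ hα (S.t_ne _), S.ν_t, add_neg_cancel]
  have hβmem : β ∈ S.integers := Or.inr (le_of_eq hνβ.symm)
  set c : k := S.η α with hcdef
  have hρβ : S.ρ β = c := rfl
  have hcne : c ≠ 0 := by
    intro h
    rcases (S.ρ_eq_zero _ hβmem).mp h with h' | h'
    · exact hβne h'
    · rw [hνβ] at h'; exact lt_irrefl _ h'
  set C : CGamma Γ := embC Γ (((abs c)⁻¹ : ℝ) : ℂ) * Xp (-(S.ν α)) with hCdef
  suffices h : ∃ hmem : (fun x => f (α * x)) ∈ LFmu S μ,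
      J ⟨fun x => f (α * x), hmem⟩ = C * J ⟨f, hf⟩ from h
  induction hf using Submodule.span_induction with
  | mem g hg =>
    obtain ⟨f0, hf0, a, γ, rfl⟩ := hg
    have hint' : Integrable (fun u => f0 (c * u)) μ := (habs f0 hf0 c hcne).1
    have hfun : (fun x => S.lift (fun u => embC Γ (f0 u)) a γ (α * x))
        = S.lift (fun u => embC Γ (f0 (c * u))) (α⁻¹ * a) (γ - S.ν α) := by
      funext x
      have hkey : (α * x - a) * S.t (-γ)
          = ((x - α⁻¹ * a) * S.t (-(γ - S.ν α))) * β := by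
        have ht : S.t (-γ) = S.t (-(γ - S.ν α)) * S.t (-S.ν α) := by
          rw [← S.t_add]
          congr 1
          abel
        rw [ht, hβdef]
        field_simp
      have hmemiff : α * x ∈ S.fracIdeal a γ ↔ x ∈ S.fracIdeal (α⁻¹ * a) (γ - S.ν α) := by
        unfold LiftSetup.fracIdeal
        simp only [Set.mem_setOf_eq, hkey]
        exact S.mul_unit_mem hβne hνβ _
      unfold LiftSetup.lift
      by_cases hx : x ∈ S.fracIdeal (α⁻¹ * a) (γ - S.ν α)
      · rw [Set.indicator_of_mem (hmemiff.mpr hx), Set.indicator_of_mem hx]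
        have hyint : (x - α⁻¹ * a) * S.t (-(γ - S.ν α)) ∈ S.integers := hx
        have : S.ρ ((α * x - a) * S.t (-γ))
            = c * S.ρ ((x - α⁻¹ * a) * S.t (-(γ - S.ν α))) := by
          rw [hkey, S.ρ_mul _ _ hyint hβmem, hρβ, mul_comm]
        rw [this]
      · rw [Set.indicator_of_notMem (fun h => hx (hmemiff.mp h)),
          Set.indicator_of_notMem hx]
    have hm : (fun x => S.lift (fun u => embC Γ (f0 u)) a γ (α * x)) ∈ LFmu S μ := by
      rw [hfun]; exact liftC_mem_mu S μ hint' _ _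
    refine ⟨hm, ?_⟩
    have e1 : (⟨fun x => S.lift (fun u => embC Γ (f0 u)) a γ (α * x), hm⟩ : LFmu S μ)
        = ⟨S.lift (fun u => embC Γ (f0 (c * u))) (α⁻¹ * a) (γ - S.ν α),
            liftC_mem_mu S μ hint' _ _⟩ := Subtype.ext hfun
    have e2 : (⟨S.lift (fun u => embC Γ (f0 u)) a γ, Submodule.subset_span ⟨f0, hf0, a, γ, rfl⟩⟩
        : LFmu S μ) = ⟨S.lift (fun u => embC Γ (f0 u)) a γ, liftC_mem_mu S μ hf0 a γ⟩ := rfl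
    rw [e1, e2, hJ _ hint', hJ _ hf0, (habs f0 hf0 c hcne).2]
    have e3 : embC Γ ((abs c)⁻¹ • ∫ u, f0 u ∂μ)
        = embC Γ (((abs c)⁻¹ : ℝ) : ℂ) * embC Γ (∫ u, f0 u ∂μ) := by
      rw [Complex.real_smul, map_mul]
    have e4 : (γ - S.ν α) = -S.ν α + γ := by abel
    rw [e3, e4, Xp_add, hCdef]
    ring
  | zero =>
    refine ⟨Submodule.zero_mem _, ?_⟩
    have e : (⟨fun x => (0 : F → CGamma Γ) (α * x), Submodule.zero_mem _⟩ : LFmu S μ)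
        = 0 := Subtype.ext rfl
    have e2 : (⟨(0 : F → CGamma Γ), Submodule.zero_mem _⟩ : LFmu S μ) = 0 := Subtype.ext rfl
    rw [e, e2, map_zero, mul_zero]
  | add g h hg hh ihg ihh =>
    obtain ⟨hmg, ehg⟩ := ihg
    obtain ⟨hmh, ehh⟩ := ihh
    have hfun : (fun x => (g + h) (α * x)) = (fun x => g (α * x)) + (fun x => h (α * x)) :=
      rfl
    have hm : (fun x => (g + h) (α * x)) ∈ LFmu S μ := by
      rw [hfun]; exact Submodule.add_mem _ hmg hmh
    refine ⟨hm, ?_⟩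
    have e1 : (⟨fun x => (g + h) (α * x), hm⟩ : LFmu S μ)
        = ⟨fun x => g (α * x), hmg⟩ + ⟨fun x => h (α * x), hmh⟩ := Subtype.ext rfl
    have e2 : (⟨g + h, Submodule.add_mem _ hg hh⟩ : LFmu S μ)
        = ⟨g, hg⟩ + ⟨h, hh⟩ := Subtype.ext rfl
    rw [e1, e2, map_add, map_add, ehg, ehh, mul_add]
  | smul r g hg ihg =>
    obtain ⟨hmg, ehg⟩ := ihg
    have hsf : (fun x => (r • g) (α * x)) = r • (fun x => g (α * x)) := by
      funext x; simp
    have hm : (fun x => (r • g) (α * x)) ∈ LFmu S μ := by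
      rw [hsf]; exact Submodule.smul_mem _ _ hmg
    refine ⟨hm, ?_⟩
    have e1 : (⟨fun x => (r • g) (α * x), hm⟩ : LFmu S μ)
        = r • ⟨fun x => g (α * x), hmg⟩ := Subtype.ext hsf
    have e2 : (⟨r • g, Submodule.smul_mem _ r hg⟩ : LFmu S μ) = r • ⟨g, hg⟩ := Subtype.ext rfl
    rw [e1, e2, J.map_smul, J.map_smul, ehg, smul_eq_mul, smul_eq_mul]
    ring
end
end

section
/- Let ω be a good multiplicative character of O_F^×, i.e. ω(x) = ω̄(ρ(x)) for all x ∈ O_F^× for some quasi-character (continuous homomorphism) ω̄ : k^× → ℂ^×. Let g be a Schwartz–Bruhat function on k, a ∈ O_F, b ∈ F, and set f = g^{a,0}·ψ_b. Then for every s ∈ ℂ with Re(s) sufficiently large, the function x ↦ f(x)ω(x)|x|_F^s·1_{O_F^×}(x) belongs to 𝓛(F^×,ψ) and the zeta integral ζ_F^1(f,ω,s) := ∫^{F^×} f(x)ω(x)|x|_F^s·1_{O_F^×}(x) d^×x equals ζ_k(g_1·ψ̄_{ρ(b)}, ω̄, s) if ν(b) ≥ 0, and equals 0 if ν(b) < 0;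 here g_1(u) := g(u − ρ(a)), ψ̄_c(u) := ψ̄(cu), and ζ_k(h, ω̄, s) := ∫_{k^×} h(u)ω̄(u)|u|^s d^×u with d^×u = |u|^{−1}du. -/
noncomputable section

open MeasureTheory

section GoodChar

variable {Γ F k : Type*} [AddCommGroup Γ] [LinearOrder Γ] [IsOrderedAddMonoid Γ] [Field F] [Field k] [TopologicalSpace k]

/-- `ψ` is a nontrivial good character of `F` of conductor `𝔣`: a homomorphism from the
additive group of `F` to the complex unit circle, trivial on `t(𝔣)O_F`, nontrivial on
`t(𝔣-1)O_F`, whose induced map `ψ̄` on the residue field `k` (given by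
`ψ̄(ρ(x)) = ψ(t(𝔣-1)x)` for `x ∈ O_F`) is well defined and continuous. -/
def LiftSetup.IsGoodCharacter (S : LiftSetup Γ F k) (ψ : F → ℂ) (𝔣 : Γ) : Prop :=
  (∀ x y : F, ψ (x + y) = ψ x * ψ y) ∧
  (∀ x : F, ‖ψ x‖ = 1) ∧
  (∀ x ∈ S.integers, ψ (S.t 𝔣 * x) = 1) ∧
  (∃ x ∈ S.integers, ψ (S.t (𝔣 - S.one) * x) ≠ 1) ∧
  (∃ ψbar : k → ℂ, Continuous ψbar ∧
    ∀ x ∈ S.integers, ψbar (S.ρ x) = ψ (S.t (𝔣 - S.one) * x))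

end GoodChar

section LFpsi

variable {Γ F k : Type*} [AddCommGroup Γ] [LinearOrder Γ] [IsOrderedAddMonoid Γ] [Field F] [Field k]
  [MeasurableSpace k]

open MeasureTheory

/-- `𝓛(F,ψ)`: the `ℂ(Γ)`-span of the functions `f·ψ_a` for `f ∈ 𝓛(F)`, `a ∈ F`. -/
def LFpsi (S : LiftSetup Γ F k) (μ : Measure k) (ψ : F → ℂ) :
    Submodule (CGamma Γ) (F → CGamma Γ) :=
  Submodule.span (CGamma Γ)
    {g | ∃ f ∈ LFmu S μ, ∃ a : F, g = fun x => embC Γ (ψ (a * x)) * f x}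

end LFpsi

section Mult

variable {Γ F k : Type*} [AddCommGroup Γ] [LinearOrder Γ] [IsOrderedAddMonoid Γ] [Field F] [Field k]
  [MeasurableSpace k]

open MeasureTheory

/-- The absolute value `|α|_F = |η(α)|·X^{ν(α)} ∈ ℂ(Γ)` of `α ∈ F^×`. -/
noncomputable def absF (S : LiftSetup Γ F k) (abs : k → ℝ) (x : F) : CGamma Γ :=
  embC Γ ((abs (S.η x) : ℝ) : ℂ) * Xp (S.ν x)

/-- `φ ∈ 𝓛(F^×,ψ)`: the function `x ↦ φ(x)|x|_F⁻¹` on `F^×` extends to a function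
in `𝓛(F,ψ)`. -/
def MultIntegrable (S : LiftSetup Γ F k) (μ : Measure k) (ψ : F → ℂ) (abs : k → ℝ)
    (φ : F → CGamma Γ) : Prop :=
  ∃ h ∈ LFpsi S μ ψ, ∀ x : F, x ≠ 0 → h x = φ x * (absF S abs x)⁻¹

open scoped Classical in
/-- The multiplicative integral `∫^{F^×} φ(x) d^×x := ∫^F φ(x)|x|_F⁻¹ dx`. -/
noncomputable def multIntegral (S : LiftSetup Γ F k) (μ : Measure k) (ψ : F → ℂ)
    (abs : k → ℝ) (Jext : LFpsi S μ ψ →ₗ[CGamma Γ] CGamma Γ)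
    (φ : F → CGamma Γ) : CGamma Γ :=
  if hm : MultIntegrable S μ ψ abs φ then
    Jext ⟨Classical.choose hm, (Classical.choose_spec hm).1⟩
  else 0

end Mult

open scoped Classical in
/-- The integrand `x ↦ f(x)ω(x)|x|_F^s·1_{O_F^×}(x)` of the one-dimensional local zeta
integral on `F`, for `f = g^{a,0}·ψ_b` and a good multiplicative character `ω = ω̄ ∘ ρ`. -/
noncomputable def zetaIntegrandF {Γ F k : Type*} [AddCommGroup Γ] [LinearOrder Γ] [IsOrderedAddMonoid Γ] [Field F]
    [Field k] (S : LiftSetup Γ F k) (abs : k → ℝ) (g : k → ℂ) (a b : F) (ψ : F → ℂ)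
    (ωbar : k → ℂ) (s : ℂ) : F → CGamma Γ :=
  fun x =>
    if x ≠ 0 ∧ S.ν x = 0 then
      embC Γ (S.lift g a 0 x * ψ (b * x) * ωbar (S.ρ x) * ((abs (S.η x) : ℂ) ^ s))
    else 0

open scoped Classical in
/-- The integrand of the local zeta integral `ζ_k(g₁·ψ̄_{ρ(b)}, ω̄, s)` on the residue
field `k`, with respect to `d^×u = |u|⁻¹du`. -/
noncomputable def zetaIntegrandk {k : Type*} [Field k] (abs : k → ℝ) (g₁ : k → ℂ)
    (c : k) (ψbar : k → ℂ) (ωbar : k → ℂ) (s : ℂ) : k → ℂ :=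
  fun u =>
    if u ≠ 0 then g₁ u * ψbar (c * u) * ωbar u * ((abs u : ℂ) ^ s) * ((abs u : ℝ) : ℂ)⁻¹
    else 0

section Helpers

variable {Γ F k : Type*} [AddCommGroup Γ] [LinearOrder Γ] [IsOrderedAddMonoid Γ] [Field F] [Field k]
variable (S : LiftSetup Γ F k)

lemma LS_t_zero : S.t 0 = 1 := by
  have h := S.t_add 0 0
  rw [add_zero] at h
  nth_rewrite 1 [← mul_one (S.t 0)] at h
  exact (mul_left_cancel₀ (S.t_ne 0) h).symm

lemma LS_ν_one : S.ν 1 = 0 := by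
  have h := S.ν_mul 1 1 one_ne_zero one_ne_zero
  rw [mul_one] at h
  have h2 : (0 : Γ) + S.ν 1 = S.ν 1 + S.ν 1 := by rw [zero_add]; exact h
  exact (add_right_cancel h2).symm

lemma LS_ν_neg_one : S.ν (-1 : F) = 0 := by
  have h := S.ν_mul (-1) (-1) (by norm_num) (by norm_num)
  rw [neg_mul_neg, one_mul, LS_ν_one] at h
  rcases lt_trichotomy (S.ν (-1 : F)) 0 with hlt | he | hgt
  · exact absurd h.symm (ne_of_lt (by exact add_neg hlt hlt))
  · exact he
  · exact absurd h.symm (ne_of_gt (by exact add_pos hgt hgt))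

lemma LS_ν_neg {x : F} (hx : x ≠ 0) : S.ν (-x) = S.ν x := by
  have h := S.ν_mul (-1) x (by norm_num) hx
  rw [neg_one_mul] at h
  rw [h, LS_ν_neg_one, zero_add]

lemma LS_ν_inv {x : F} (hx : x ≠ 0) : S.ν x⁻¹ = -S.ν x := by
  have h := S.ν_mul x x⁻¹ hx (inv_ne_zero hx)
  rw [mul_inv_cancel₀ hx, LS_ν_one] at h
  exact eq_neg_of_add_eq_zero_right h.symm

lemma LS_ρ_zero : S.ρ 0 = 0 := by
  have h := S.ρ_add 0 0 (Or.inl rfl) (Or.inl rfl)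
  rw [add_zero] at h
  exact (left_eq_add.mp h)

lemma LS_neg_mem {x : F} (hx : x ∈ S.integers) : -x ∈ S.integers := by
  rcases eq_or_ne x 0 with rfl | hne
  · simp [LiftSetup.integers]
  · exact Or.inr (by rw [LS_ν_neg S hne]; rcases hx with h | h; exact absurd h hne; exact h)

lemma LS_ρ_neg {x : F} (hx : x ∈ S.integers) : S.ρ (-x) = -S.ρ x := by
  have h := S.ρ_add x (-x) hx (LS_neg_mem S hx)
  rw [add_neg_cancel, LS_ρ_zero] at h
  exact eq_neg_of_add_eq_zero_right h.symm

lemma LS_add_mem {x y : F} (hx : x ∈ S.integers) (hy : y ∈ S.integers) :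
    x + y ∈ S.integers := by
  rcases eq_or_ne x 0 with rfl | hxne
  · simpa using hy
  rcases eq_or_ne y 0 with rfl | hyne
  · simpa using hx
  rcases eq_or_ne (x + y) 0 with h0 | hne
  · exact Or.inl h0
  · refine Or.inr (le_trans ?_ (S.ν_add x y hxne hyne hne))
    rcases hx with h | h; exact absurd h hxne
    rcases hy with h' | h'; exact absurd h' hyne
    exact le_min h h'

lemma LS_ν_add_eq {x y : F} (hx : x ≠ 0) (hy : y ≠ 0) (h : S.ν x < S.ν y) :
    x + y ≠ 0 ∧ S.ν (x + y) = S.ν x := by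
  have hne : x + y ≠ 0 := by
    intro h0
    have : x = -y := eq_neg_of_add_eq_zero_left h0
    rw [this, LS_ν_neg S hy] at h
    exact lt_irrefl _ h
  refine ⟨hne, le_antisymm ?_ ?_⟩
  · by_contra hgt
    push_neg at hgt
    have h2 := S.ν_add (x + y) (-y) hne (neg_ne_zero.mpr hy) (by rw [add_neg_cancel_right]; exact hx)
    rw [add_neg_cancel_right, LS_ν_neg S hy] at h2
    have : S.ν x < min (S.ν (x + y)) (S.ν y) := lt_min hgt h
    exact absurd h2 (not_le.mpr this)
  · have := S.ν_add x y hx hy hne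
    rwa [min_eq_left h.le] at this

lemma LS_mem_fracIdeal {a x : F} {γ : Γ} :
    x ∈ S.fracIdeal a γ ↔ (x = a ∨ γ ≤ S.ν (x - a)) := by
  rcases eq_or_ne x a with rfl | hne
  · simp [LiftSetup.fracIdeal, LiftSetup.integers]
  · have hsub : x - a ≠ 0 := sub_ne_zero.mpr hne
    have hmul : (x - a) * S.t (-γ) ≠ 0 := mul_ne_zero hsub (S.t_ne _)
    have hν : S.ν ((x - a) * S.t (-γ)) = S.ν (x - a) + (-γ) := by
      rw [S.ν_mul _ _ hsub (S.t_ne _), S.ν_t]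
    constructor
    · rintro (h | h)
      · exact absurd h hmul
      · right; rw [hν, ← sub_eq_add_neg] at h; exact sub_nonneg.mp h
    · rintro (h | h)
      · exact absurd h hne
      · exact Or.inr (by rw [hν, ← sub_eq_add_neg]; exact sub_nonneg.mpr h)

lemma LS_lift_of_mem {A : Type*} [Zero A] (f : k → A) {a x : F} {γ : Γ}
    (h : x ∈ S.fracIdeal a γ) :
    S.lift f a γ x = f (S.ρ ((x - a) * S.t (-γ))) := Set.indicator_of_mem h _

lemma LS_lift_of_not_mem {A : Type*} [Zero A] (f : k → A) {a x : F} {γ : Γ}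
    (h : x ∉ S.fracIdeal a γ) : S.lift f a γ x = 0 := Set.indicator_of_notMem h _

lemma LS_mem_fracIdeal_zero {x : F} : x ∈ S.fracIdeal 0 0 ↔ x ∈ S.integers := by
  rw [LS_mem_fracIdeal]
  constructor
  · rintro (rfl | h)
    · exact Or.inl rfl
    · rcases eq_or_ne x 0 with rfl | hne
      · exact Or.inl rfl
      · exact Or.inr (by rwa [sub_zero] at h)
  · rintro (rfl | h)
    · exact Or.inl rfl
    · exact Or.inr (by rwa [sub_zero])

lemma LS_lift_zero_apply {A : Type*} [Zero A] (f : k → A) {x : F}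
    (h : x ∈ S.integers) : S.lift f 0 0 x = f (S.ρ x) := by
  rw [LS_lift_of_mem S f (LS_mem_fracIdeal_zero S |>.mpr h), sub_zero, neg_zero, LS_t_zero,
    mul_one]

lemma LS_ρ_pos_eq_zero {x : F} (h : x = 0 ∨ 0 < S.ν x) : S.ρ x = 0 := by
  rcases h with rfl | h
  · exact LS_ρ_zero S
  · exact (S.ρ_eq_zero x (Or.inr h.le)).mpr (Or.inr h)

/-- Shift invariance of height-zero lifts under translation by `τ` with `ν τ > 0`. -/
lemma LS_lift_shift {A : Type*} [Zero A] (f : k → A) {τ : F} (hτ0 : τ ≠ 0)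
    (hτ : 0 < S.ν τ) (x : F) : S.lift f 0 0 (x + τ) = S.lift f 0 0 x := by
  have hτO : τ ∈ S.integers := Or.inr hτ.le
  by_cases hx : x ∈ S.integers
  · have hxτ : x + τ ∈ S.integers := LS_add_mem S hx hτO
    rw [LS_lift_zero_apply S f hxτ, LS_lift_zero_apply S f hx,
      S.ρ_add x τ hx hτO, LS_ρ_pos_eq_zero S (Or.inr hτ), add_zero]
  · have hxne : x ≠ 0 := by rintro rfl; exact hx (Or.inl rfl)
    have hxν : S.ν x < 0 := by
      rcases lt_or_ge (S.ν x) 0 with h | h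
      · exact h
      · exact absurd (Or.inr h) hx
    obtain ⟨hne, hν⟩ := LS_ν_add_eq S hxne hτ0 (lt_trans hxν hτ)
    have hnmem : x + τ ∉ S.integers := by
      rintro (h | h)
      · exact hne h
      · rw [hν] at h; exact absurd h (not_le.mpr hxν)
    rw [LS_lift_of_not_mem S f (fun h => hnmem ((LS_mem_fracIdeal_zero S).mp h)),
      LS_lift_of_not_mem S f (fun h => hx ((LS_mem_fracIdeal_zero S).mp h))]

/-- Lifts are eventually constant near `0`. -/
lemma LS_lift_eventually {A : Type*} [Zero A] (f : k → A) (a : F) (γ : Γ) :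
    ∃ δ : Γ, ∀ x : F, x ≠ 0 → δ ≤ S.ν x → S.lift f a γ x = S.lift f a γ 0 := by
  refine ⟨(γ + S.one) ⊔ (S.ν a + S.one), fun x hx hνx => ?_⟩
  have hγx : γ + S.one ≤ S.ν x := le_trans le_sup_left hνx
  have hγx' : γ < S.ν x := lt_of_lt_of_le (lt_add_of_pos_right γ S.one_pos) hγx
  by_cases ha : a = 0
  · subst ha
    have hm : x ∈ S.fracIdeal 0 γ := (LS_mem_fracIdeal S).mpr (Or.inr (by rw [sub_zero]; exact hγx'.le))
    have hm0 : (0 : F) ∈ S.fracIdeal 0 γ := (LS_mem_fracIdeal S).mpr (Or.inl rfl)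
    rw [LS_lift_of_mem S f hm, LS_lift_of_mem S f hm0, sub_zero, sub_zero, zero_mul,
      LS_ρ_zero]
    congr 1
    refine LS_ρ_pos_eq_zero S (Or.inr ?_)
    rw [S.ν_mul x _ hx (S.t_ne _), S.ν_t, ← sub_eq_add_neg]
    exact sub_pos.mpr hγx'
  · have hax : S.ν a < S.ν x :=
      lt_of_lt_of_le (lt_add_of_pos_right _ S.one_pos) (le_trans le_sup_right hνx)
    obtain ⟨hsubne, hsubν⟩ := LS_ν_add_eq S (neg_ne_zero.mpr ha) hx
      (by rw [LS_ν_neg S ha]; exact hax)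
    rw [neg_add_eq_sub] at hsubne hsubν
    rw [LS_ν_neg S ha] at hsubν
    have h0a : (0 : F) - a ≠ 0 := by rw [zero_sub]; exact neg_ne_zero.mpr ha
    have h0aν : S.ν (0 - a) = S.ν a := by rw [zero_sub, LS_ν_neg S ha]
    by_cases hmem : γ ≤ S.ν a
    · have hm : x ∈ S.fracIdeal a γ :=
        (LS_mem_fracIdeal S).mpr (Or.inr (by rw [hsubν]; exact hmem))
      have hm0 : (0 : F) ∈ S.fracIdeal a γ :=
        (LS_mem_fracIdeal S).mpr (Or.inr (by rw [h0aν]; exact hmem))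
      rw [LS_lift_of_mem S f hm, LS_lift_of_mem S f hm0]
      congr 1
      have hsplit : (x - a) * S.t (-γ) = x * S.t (-γ) + (0 - a) * S.t (-γ) := by ring
      have hx1 : x * S.t (-γ) ≠ 0 := mul_ne_zero hx (S.t_ne _)
      have hx1ν : S.ν (x * S.t (-γ)) = S.ν x + (-γ) := by
        rw [S.ν_mul _ _ hx (S.t_ne _), S.ν_t]
      have hx1pos : 0 < S.ν (x * S.t (-γ)) := by
        rw [hx1ν, ← sub_eq_add_neg]; exact sub_pos.mpr hγx'
      have ha1 : S.ν ((0 - a) * S.t (-γ)) = S.ν a + (-γ) := by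
        rw [S.ν_mul _ _ h0a (S.t_ne _), S.ν_t, h0aν]
      rw [hsplit, S.ρ_add _ _ (Or.inr hx1pos.le) (Or.inr (by rw [ha1, ← sub_eq_add_neg]; exact sub_nonneg.mpr hmem)),
        LS_ρ_pos_eq_zero S (Or.inr hx1pos), zero_add]
    · have hm : x ∉ S.fracIdeal a γ := by
        rw [LS_mem_fracIdeal]
        rintro (rfl | h)
        · exact absurd rfl (ne_of_gt hax)
        · rw [hsubν] at h; exact hmem h
      have hm0 : (0 : F) ∉ S.fracIdeal a γ := by
        rw [LS_mem_fracIdeal]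
        rintro (h | h)
        · exact ha h.symm
        · rw [h0aν] at h; exact hmem h
      rw [LS_lift_of_not_mem S f hm, LS_lift_of_not_mem S f hm0]

lemma LS_mul_mem {x y : F} (hx : x ∈ S.integers) (hy : y ∈ S.integers) :
    x * y ∈ S.integers := by
  rcases eq_or_ne x 0 with rfl | hxne
  · simp [LiftSetup.integers]
  rcases eq_or_ne y 0 with rfl | hyne
  · simp [LiftSetup.integers]
  refine Or.inr ?_
  rw [S.ν_mul x y hxne hyne]
  rcases hx with h | h; exact absurd h hxne
  rcases hy with h' | h'; exact absurd h' hyne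
  exact add_nonneg h h'

end Helpers


section Helpers2

open MeasureTheory

variable {Γ F k : Type*} [AddCommGroup Γ] [LinearOrder Γ] [IsOrderedAddMonoid Γ] [Field F] [Field k] [MeasurableSpace k]
variable (S : LiftSetup Γ F k)

lemma LFmu_eventually (μ : Measure k) {d : F → CGamma Γ} (hd : d ∈ LFmu S μ) :
    ∃ δ : Γ, ∀ x : F, x ≠ 0 → δ ≤ S.ν x → d x = d 0 := by
  induction hd using Submodule.span_induction with
  | mem x h => obtain ⟨f, _, a, γ, rfl⟩ := h; exact LS_lift_eventually S _ a γ
  | zero => exact ⟨0, fun _ _ _ => rfl⟩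
  | add x y hx hy ihx ihy =>
      obtain ⟨δ₁, h₁⟩ := ihx; obtain ⟨δ₂, h₂⟩ := ihy
      exact ⟨δ₁ ⊔ δ₂, fun z hz hν => by
        simp only [Pi.add_apply, h₁ z hz (le_trans le_sup_left hν),
          h₂ z hz (le_trans le_sup_right hν)]⟩
  | smul c x hx ihx =>
      obtain ⟨δ, hδ⟩ := ihx
      exact ⟨δ, fun z hz hν => by simp only [Pi.smul_apply, hδ z hz hν]⟩

lemma LFpsi_eventually (μ : Measure k) (ψ : F → ℂ)
    (hψ0 : ψ 0 = 1)
    (hψ1 : ∀ y : F, y ≠ 0 → S.one ≤ S.ν y → ψ y = 1)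
    {d : F → CGamma Γ} (hd : d ∈ LFpsi S μ ψ) :
    ∃ δ : Γ, ∀ x : F, x ≠ 0 → δ ≤ S.ν x → d x = d 0 := by
  induction hd using Submodule.span_induction with
  | mem x h =>
      obtain ⟨f, hf, c, rfl⟩ := h
      obtain ⟨δf, hδf⟩ := LFmu_eventually S μ hf
      rcases eq_or_ne c 0 with rfl | hc
      · exact ⟨δf, fun z hz hν => by
          simp only [zero_mul, hψ0, hδf z hz hν]⟩
      · refine ⟨δf ⊔ (S.one - S.ν c), fun z hz hν => ?_⟩
        have h1 : ψ (c * z) = 1 := by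
          refine hψ1 _ (mul_ne_zero hc hz) ?_
          rw [S.ν_mul c z hc hz]
          have h2 : S.one - S.ν c ≤ S.ν z := le_trans le_sup_right hν
          have := sub_le_iff_le_add.mp h2
          rwa [add_comm] at this
        have h0 : ψ (c * 0) = 1 := by rw [mul_zero, hψ0]
        simp only [h1, h0, hδf z hz (le_trans le_sup_left hν)]
  | zero => exact ⟨0, fun _ _ _ => rfl⟩
  | add x y hx hy ihx ihy =>
      obtain ⟨δ₁, h₁⟩ := ihx; obtain ⟨δ₂, h₂⟩ := ihy
      exact ⟨δ₁ ⊔ δ₂, fun z hz hν => by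
        simp only [Pi.add_apply, h₁ z hz (le_trans le_sup_left hν),
          h₂ z hz (le_trans le_sup_right hν)]⟩
  | smul c x hx ihx =>
      obtain ⟨δ, hδ⟩ := ihx
      exact ⟨δ, fun z hz hν => by simp only [Pi.smul_apply, hδ z hz hν]⟩

lemma LFpsi_unique (μ : Measure k) (ψ : F → ℂ)
    (hψ0 : ψ 0 = 1)
    (hψ1 : ∀ y : F, y ≠ 0 → S.one ≤ S.ν y → ψ y = 1)
    {h₁ h₂ : F → CGamma Γ} (m₁ : h₁ ∈ LFpsi S μ ψ) (m₂ : h₂ ∈ LFpsi S μ ψ)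
    (hag : ∀ x : F, x ≠ 0 → h₁ x = h₂ x) : h₁ = h₂ := by
  have hd : h₁ - h₂ ∈ LFpsi S μ ψ := Submodule.sub_mem _ m₁ m₂
  obtain ⟨δ, hδ⟩ := LFpsi_eventually S μ ψ hψ0 hψ1 hd
  have h0 : h₁ 0 = h₂ 0 := by
    have hs := hδ (S.t δ) (S.t_ne δ) (le_of_eq (S.ν_t δ).symm)
    simp only [Pi.sub_apply] at hs
    rw [hag (S.t δ) (S.t_ne δ), sub_self] at hs
    exact sub_eq_zero.mp hs.symm
  funext x
  rcases eq_or_ne x 0 with rfl | hx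
  · exact h0
  · exact hag x hx

lemma Xp_zero : (Xp (0 : Γ) : CGamma Γ) = 1 := by
  rw [Xp, ← AddMonoidAlgebra.one_def, map_one]

lemma embC_inv (c : ℂ) : embC Γ c⁻¹ = (embC Γ c)⁻¹ := map_inv₀ (embC Γ) c

lemma embC_inj : Function.Injective (embC Γ) := (embC Γ).injective

end Helpers2
open MeasureTheory in
/-- Let `ω` be a good multiplicative character of `O_F^×` induced by the
quasi-character `ω̄` of `k^×`, let `g` be a Schwartz–Bruhat function on `k`, `a ∈ O_F`,
`b ∈ F`, and `f = g^{a,0}·ψ_b`.  For `Re(s)` sufficiently large the zeta integrand belongs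
to `𝓛(F^×,ψ)`, and `ζ_F^1(f,ω,s) = ζ_k(g₁·ψ̄_{ρ(b)}, ω̄, s)` if `ν(b) ≥ 0` while
`ζ_F^1(f,ω,s) = 0` if `ν(b) < 0`, where `g₁(u) = g(u - ρ(a))`. -/
theorem statement10
    {Γ F k : Type*} [AddCommGroup Γ] [LinearOrder Γ] [IsOrderedAddMonoid Γ] [Field F] [Field k]
    [TopologicalSpace k] [IsTopologicalRing k] [LocallyCompactSpace k]
    [MeasurableSpace k] [BorelSpace k]
    (hk_nondiscrete : ¬ IsOpen ({0} : Set k))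
    (μ : Measure k) [μ.IsAddHaarMeasure]
    (S : LiftSetup Γ F k)
    (ψ : F → ℂ) (hψ : S.IsGoodCharacter ψ S.one)
    (ψbar : k → ℂ) (hψbar_cont : Continuous ψbar)
    (hψbar : ∀ x ∈ S.integers, ψbar (S.ρ x) = ψ x)
    -- the normalized absolute value on `k`:
    (abs : k → ℝ)
    (habs_pos : ∀ c : k, c ≠ 0 → 0 < abs c)
    (habs : ∀ (g : k → ℂ), Integrable g μ → ∀ c : k, c ≠ 0 →
      Integrable (fun u => g (c * u)) μ ∧ (∫ u, g (c * u) ∂μ) = (abs c)⁻¹ • ∫ u, g u ∂μ)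
    -- the quasi-character `ω̄` of `k^×` inducing the good character `ω` of `O_F^×`:
    (ωbar : k → ℂ)
    (hω_hom : ∀ u v : k, u ≠ 0 → v ≠ 0 → ωbar (u * v) = ωbar u * ωbar v)
    (hω_ne : ∀ u : k, u ≠ 0 → ωbar u ≠ 0)
    (hω_cont : ContinuousOn ωbar {u : k | u ≠ 0})
    -- the translation-invariant extension of `∫^F` to `𝓛(F,ψ)`:
    (Jext : LFpsi S μ ψ →ₗ[CGamma Γ] CGamma Γ)
    (hJext : ∀ (f : k → ℂ) (hf : Integrable f μ) (a : F) (γ : Γ)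
      (hmem : S.lift (fun u => embC Γ (f u)) a γ ∈ LFpsi S μ ψ),
      Jext ⟨S.lift (fun u => embC Γ (f u)) a γ, hmem⟩ = embC Γ (∫ u, f u ∂μ) * Xp γ)
    (hJinv : ∀ (g : F → CGamma Γ) (hg : g ∈ LFpsi S μ ψ) (τ : F)
      (hg' : (fun x => g (x + τ)) ∈ LFpsi S μ ψ),
      Jext ⟨fun x => g (x + τ), hg'⟩ = Jext ⟨g, hg⟩)
    -- the Schwartz–Bruhat function `g` on `k`, with `a ∈ O_F`, `b ∈ F`:
    (SchwartzBruhat : Set (k → ℂ))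
    (hSB_int : ∀ g₀ ∈ SchwartzBruhat, Integrable g₀ μ)
    (g : k → ℂ) (hg : g ∈ SchwartzBruhat)
    (a : F) (ha : a ∈ S.integers) (b : F)
    -- convergence of the local zeta integral on `k` for `Re(s)` sufficiently large:
    (s₀ : ℝ)
    (hconv : ∀ s : ℂ, s₀ ≤ s.re →
      Integrable (zetaIntegrandk abs (fun u => g (u - S.ρ a)) (S.ρ b) ψbar ωbar s) μ) :
    ∃ s₁ : ℝ, ∀ s : ℂ, s₁ ≤ s.re →
      MultIntegrable S μ ψ abs (zetaIntegrandF S abs g a b ψ ωbar s) ∧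
      ((b = 0 ∨ 0 ≤ S.ν b) →
        multIntegral S μ ψ abs Jext (zetaIntegrandF S abs g a b ψ ωbar s)
          = embC Γ (∫ u, zetaIntegrandk abs (fun u' => g (u' - S.ρ a)) (S.ρ b) ψbar ωbar s u ∂μ)) ∧
      ((b ≠ 0 ∧ S.ν b < 0) →
        multIntegral S μ ψ abs Jext (zetaIntegrandF S abs g a b ψ ωbar s) = 0) := by

  classical
  obtain ⟨hψ_add, hψ_abs, hψ_cond, hψ_nt, -⟩ := hψ
  have hψ0 : ψ 0 = 1 := by
    have h := hψ_add 0 0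
    rw [add_zero] at h
    have hne : ψ 0 ≠ 0 := by
      intro h0
      have h1 := hψ_abs 0
      rw [h0] at h1
      simpa using h1
    nth_rewrite 1 [← mul_one (ψ 0)] at h
    exact (mul_left_cancel₀ hne h).symm
  have hψ1 : ∀ y : F, y ≠ 0 → S.one ≤ S.ν y → ψ y = 1 := by
    intro y hy hνy
    have hw : S.t (-S.one) * y ∈ S.integers := by
      refine Or.inr ?_
      rw [S.ν_mul _ _ (S.t_ne _) hy, S.ν_t, neg_add_eq_sub]
      exact sub_nonneg.mpr hνy
    have h := hψ_cond _ hw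
    rwa [← mul_assoc, ← S.t_add, add_neg_cancel, LS_t_zero, one_mul] at h
  have hψbar_abs : ∀ v : k, ‖ψbar v‖ = 1 := by
    intro v
    obtain ⟨x, hxO, rfl⟩ := S.ρ_surj v
    rw [hψbar x hxO]; exact hψ_abs x
  have hρ_ne : ∀ x : F, x ≠ 0 → S.ν x = 0 → S.ρ x ≠ 0 := by
    intro x hx hν h0
    rcases (S.ρ_eq_zero x (Or.inr (le_of_eq hν.symm))).mp h0 with rfl | hpos
    · exact hx rfl
    · rw [hν] at hpos; exact lt_irrefl _ hpos
  have hlift_val : ∀ x : F, x ≠ 0 → S.ν x = 0 →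
      S.lift g a 0 x = g (S.ρ x - S.ρ a) := by
    intro x hx hν
    have hxO : x ∈ S.integers := Or.inr (le_of_eq hν.symm)
    have hxa : x - a ∈ S.integers := by
      rw [sub_eq_add_neg]; exact LS_add_mem S hxO (LS_neg_mem S ha)
    have hmem : x ∈ S.fracIdeal a 0 := by
      rw [LS_mem_fracIdeal]
      rcases hxa with h | h
      · exact Or.inl (sub_eq_zero.mp h)
      · exact Or.inr h
    rw [LS_lift_of_mem S g hmem, neg_zero, LS_t_zero, mul_one]
    congr 1
    rw [sub_eq_add_neg, S.ρ_add x (-a) hxO (LS_neg_mem S ha), LS_ρ_neg S ha,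
      ← sub_eq_add_neg]
  have hη : ∀ x : F, S.ν x = 0 → S.η x = S.ρ x := by
    intro x hν
    rw [LiftSetup.η, hν, neg_zero, LS_t_zero, mul_one]
  have htarget : ∀ s : ℂ, ∀ x : F, x ≠ 0 → S.ν x = 0 →
      zetaIntegrandF S abs g a b ψ ωbar s x * (absF S abs x)⁻¹
        = embC Γ (g (S.ρ x - S.ρ a) * ψ (b * x) * ωbar (S.ρ x)
            * ((abs (S.ρ x) : ℂ) ^ s) * ((abs (S.ρ x) : ℂ))⁻¹) := by
    intro s x hx hν
    simp only [zetaIntegrandF, absF]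
    rw [if_pos (show x ≠ 0 ∧ S.ν x = 0 from ⟨hx, hν⟩), hlift_val x hx hν, hη x hν, hν,
      Xp_zero, mul_one, ← embC_inv, ← map_mul]
  have htarget0 : ∀ s : ℂ, ∀ x : F, x ≠ 0 → S.ν x ≠ 0 →
      zetaIntegrandF S abs g a b ψ ωbar s x * (absF S abs x)⁻¹ = 0 := by
    intro s x hx hν
    simp only [zetaIntegrandF]
    rw [if_neg (fun hc => hν hc.2), zero_mul]
  refine ⟨s₀, fun s hs => ?_⟩
  have hint : Integrable (zetaIntegrandk abs (fun u' => g (u' - S.ρ a)) (S.ρ b) ψbar ωbar s) μ :=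
    hconv s hs
  set Z : k → ℂ := zetaIntegrandk abs (fun u' => g (u' - S.ρ a)) (S.ρ b) ψbar ωbar s with hZ
  by_cases hb : b = 0 ∨ 0 ≤ S.ν b
  · -- case `b ∈ O_F`
    have hbO : b ∈ S.integers := hb
    set W := S.lift (fun u => embC Γ (Z u)) 0 0 with hWdef
    have hWmu : W ∈ LFmu S μ := liftC_mem_mu S μ hint 0 0
    have hWmem : W ∈ LFpsi S μ ψ := by
      refine Submodule.subset_span ⟨W, hWmu, 0, funext fun x => ?_⟩
      rw [zero_mul, hψ0, map_one, one_mul]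
    have hWkey : ∀ x : F, x ≠ 0 →
        W x = zetaIntegrandF S abs g a b ψ ωbar s x * (absF S abs x)⁻¹ := by
      intro x hx
      by_cases hν : S.ν x = 0
      · have hxO : x ∈ S.integers := Or.inr (le_of_eq hν.symm)
        rw [htarget s x hx hν, hWdef]
        simp only [LS_lift_zero_apply S (fun u => embC Γ (Z u)) hxO]
        congr 1
        rw [hZ]
        simp only [zetaIntegrandk]
        rw [if_pos (hρ_ne x hx hν), ← S.ρ_mul b x hbO hxO,
          hψbar _ (LS_mul_mem S hbO hxO)]
      · rw [htarget0 s x hx hν, hWdef]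
        rcases lt_or_gt_of_ne hν with hlt | hgt
        · refine LS_lift_of_not_mem S _ (fun hm => ?_)
          rcases (LS_mem_fracIdeal_zero S).mp hm with h | h
          · exact hx h
          · exact absurd h (not_le.mpr hlt)
        · have hxO : x ∈ S.integers := Or.inr hgt.le
          simp only [LS_lift_zero_apply S (fun u => embC Γ (Z u)) hxO]
          rw [LS_ρ_pos_eq_zero S (Or.inr hgt), hZ]
          simp only [zetaIntegrandk]
          rw [if_neg (fun hc => hc rfl), map_zero]
    have hmult : MultIntegrable S μ ψ abs (zetaIntegrandF S abs g a b ψ ωbar s) :=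
      ⟨W, hWmem, hWkey⟩
    refine ⟨hmult, fun _ => ?_, fun hcon => ?_⟩
    · simp only [multIntegral]
      rw [dif_pos hmult]
      have heq : Classical.choose hmult = W :=
        LFpsi_unique S μ ψ hψ0 hψ1 (Classical.choose_spec hmult).1 hWmem
          (fun x hx => by
            rw [(Classical.choose_spec hmult).2 x hx, ← hWkey x hx])
      have hsub : (⟨Classical.choose hmult, (Classical.choose_spec hmult).1⟩ :
          LFpsi S μ ψ) = ⟨W, hWmem⟩ := Subtype.ext heq
      rw [hsub]
      have hval := hJext Z hint 0 0 hWmem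
      rw [Xp_zero, mul_one] at hval
      exact hval
    · rcases hb with rfl | hble
      · exact absurd rfl hcon.1
      · exact absurd hble (not_le.mpr hcon.2)
  · -- case `ν b < 0`
    push_neg at hb
    obtain ⟨hbne, hbν⟩ := hb
    set m : k → ℂ := fun u => (starRingEnd ℂ) (ψbar (S.ρ b * u)) with hm
    set Z₀ : k → ℂ := fun u => m u * Z u with hZ₀
    have hZ₀int : Integrable Z₀ μ := by
      refine hint.bdd_mul (c := 1) ?_ (Filter.Eventually.of_forall fun u => ?_)
      · exact (continuous_star.comp
          (hψbar_cont.comp (continuous_const.mul continuous_id))).aestronglyMeasurable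
      · rw [hm]
        simp only [Complex.norm_conj]
        rw [hψbar_abs]
    set W' := fun x => embC Γ (ψ (b * x)) * S.lift (fun u => embC Γ (Z₀ u)) 0 0 x with hW'
    have hW'mem : W' ∈ LFpsi S μ ψ :=
      Submodule.subset_span
        ⟨S.lift (fun u => embC Γ (Z₀ u)) 0 0, liftC_mem_mu S μ hZ₀int 0 0, b, hW'⟩
    have hW'key : ∀ x : F, x ≠ 0 →
        W' x = zetaIntegrandF S abs g a b ψ ωbar s x * (absF S abs x)⁻¹ := by
      intro x hx
      by_cases hν : S.ν x = 0
      · have hxO : x ∈ S.integers := Or.inr (le_of_eq hν.symm)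
        rw [htarget s x hx hν, hW']
        simp only [LS_lift_zero_apply S (fun u => embC Γ (Z₀ u)) hxO]
        rw [← map_mul]
        congr 1
        rw [hZ₀, hm, hZ]
        simp only [zetaIntegrandk]
        rw [if_pos (hρ_ne x hx hν)]
        have hv : ψbar (S.ρ b * S.ρ x) * (starRingEnd ℂ) (ψbar (S.ρ b * S.ρ x)) = 1 := by
          rw [Complex.mul_conj, Complex.normSq_eq_norm_sq, hψbar_abs, one_pow,
            Complex.ofReal_one]
        linear_combination (ψ (b * x) * g (S.ρ x - S.ρ a) * ωbar (S.ρ x)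
          * ((abs (S.ρ x) : ℂ) ^ s) * ((abs (S.ρ x) : ℂ))⁻¹) * hv
      · rw [htarget0 s x hx hν, hW']
        simp only []
        rcases lt_or_gt_of_ne hν with hlt | hgt
        · rw [LS_lift_of_not_mem S _ (fun hm' => ?_), mul_zero]
          rcases (LS_mem_fracIdeal_zero S).mp hm' with h | h
          · exact hx h
          · exact absurd h (not_le.mpr hlt)
        · have hxO : x ∈ S.integers := Or.inr hgt.le
          simp only [LS_lift_zero_apply S (fun u => embC Γ (Z₀ u)) hxO]
          rw [LS_ρ_pos_eq_zero S (Or.inr hgt), hZ₀, hZ]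
          simp only [zetaIntegrandk]
          rw [if_neg (fun hc => hc rfl), mul_zero, map_zero, mul_zero]
    have hmult : MultIntegrable S μ ψ abs (zetaIntegrandF S abs g a b ψ ωbar s) :=
      ⟨W', hW'mem, hW'key⟩
    refine ⟨hmult, fun hcon => ?_, fun _ => ?_⟩
    · rcases hcon with rfl | h
      · exact absurd rfl hbne
      · exact absurd h (not_le.mpr hbν)
    · simp only [multIntegral]
      rw [dif_pos hmult]
      have heq : Classical.choose hmult = W' :=
        LFpsi_unique S μ ψ hψ0 hψ1 (Classical.choose_spec hmult).1 hW'mem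
          (fun x hx => by
            rw [(Classical.choose_spec hmult).2 x hx, ← hW'key x hx])
      have hsub : (⟨Classical.choose hmult, (Classical.choose_spec hmult).1⟩ :
          LFpsi S μ ψ) = ⟨W', hW'mem⟩ := Subtype.ext heq
      rw [hsub]
      obtain ⟨x₀, hx₀O, hx₀⟩ := hψ_nt
      have hx₀' : ψ x₀ ≠ 1 := by rwa [sub_self, LS_t_zero, one_mul] at hx₀
      have hx₀ne : x₀ ≠ 0 := by rintro rfl; exact hx₀' hψ0
      set τ := b⁻¹ * x₀ with hτ
      have hτne : τ ≠ 0 := mul_ne_zero (inv_ne_zero hbne) hx₀ne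
      have hτν : 0 < S.ν τ := by
        rw [hτ, S.ν_mul _ _ (inv_ne_zero hbne) hx₀ne, LS_ν_inv S hbne]
        have hx₀ν : 0 ≤ S.ν x₀ := by
          rcases hx₀O with h | h
          · exact absurd h hx₀ne
          · exact h
        exact add_pos_of_pos_of_nonneg (neg_pos.mpr hbν) hx₀ν
      have hbτ : b * τ = x₀ := by rw [hτ]; field_simp
      have hψbτ : ψ (b * τ) ≠ 1 := by rw [hbτ]; exact hx₀'
      have hshift : (fun x => W' (x + τ)) = embC Γ (ψ (b * τ)) • W' := by
        funext x
        simp only [Pi.smul_apply, smul_eq_mul, hW']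
        rw [LS_lift_shift S _ hτne hτν x, show b * (x + τ) = b * x + b * τ by ring,
          hψ_add, map_mul]
        ring
      have hmem2 : (fun x => W' (x + τ)) ∈ LFpsi S μ ψ := by
        rw [hshift]; exact Submodule.smul_mem _ _ hW'mem
      have hJ := hJinv W' hW'mem τ hmem2
      have hsub2 : (⟨fun x => W' (x + τ), hmem2⟩ : LFpsi S μ ψ)
          = embC Γ (ψ (b * τ)) • ⟨W', hW'mem⟩ := Subtype.ext hshift
      rw [hsub2, _root_.map_smul, smul_eq_mul] at hJ
      by_contra hne0
      have hcancel : embC Γ (ψ (b * τ)) = 1 :=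
        mul_right_cancel₀ hne0 (by rw [hJ, one_mul])
      exact hψbτ (embC_inj (by rw [hcancel, map_one]))
end
end
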